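/- Let M be a complex matrix, let A=(a_1,...,a_s) be a tuple of distinct row indices and B=(b_1,...,b_s) a tuple of distinct column indices of the same length s, let a, ā be two further distinct row indices not occurring in A, and b, b̄ two further distinct column indices not occurring in B. Then the minors of M satisfy the Jacobi identity M^{A,B}·M^{aāA,bb̄B} − M^{aA,bB}·M^{āA,b̄B} + M^{āA,bB}·M^{aA,b̄B} = 0. -/

import Mathlib

open Matrix

section Key

variable {R : Type*} [CommRing R] {s : ℕ}

/-- Key step: `det N` times the 2×2 minor of the adjugate
equals `det N ^ 2` times the inner minor. -/
lemma jacobi_key (N : Matrix (Fin (s + 2)) (Fin (s + 2)) R) :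
    N.det * (adjugate N 0 0 * adjugate N 1 1 - adjugate N 0 1 * adjugate N 1 0)
      = N.det ^ 2 *
        (N.submatrix (fun k : Fin s => k.succ.succ) (fun k : Fin s => k.succ.succ)).det := by
  classical
  set e : Fin 2 ⊕ Fin s ≃ Fin (s + 2) :=
    finSumFinEquiv.trans (finCongr (by omega)) with he
  set N' := N.submatrix e e with hN'
  set adj' := (adjugate N).submatrix e e with hadj'
  have hmul : N' * adj' = N.det • (1 : Matrix (Fin 2 ⊕ Fin s) (Fin 2 ⊕ Fin s) R) := by
    rw [hN', hadj', submatrix_mul_equiv, mul_adjugate]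
    ext i j
    simp [Matrix.one_apply, Equiv.apply_eq_iff_eq]
  have hsmul : (N.det • (1 : Matrix (Fin 2 ⊕ Fin s) (Fin 2 ⊕ Fin s) R)) =
      fromBlocks (N.det • (1 : Matrix (Fin 2) (Fin 2) R)) 0 0
        (N.det • (1 : Matrix (Fin s) (Fin s) R)) := by
    rw [← fromBlocks_one, fromBlocks_smul]
    simp
  rw [← fromBlocks_toBlocks N', ← fromBlocks_toBlocks adj', fromBlocks_multiply, hsmul] at hmul
  have h1 : N'.toBlocks₁₁ * adj'.toBlocks₁₁ + N'.toBlocks₁₂ * adj'.toBlocks₂₁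
      = N.det • (1 : Matrix (Fin 2) (Fin 2) R) := by
    have := congrArg Matrix.toBlocks₁₁ hmul
    simpa [toBlocks_fromBlocks₁₁] using this
  have h2 : N'.toBlocks₂₁ * adj'.toBlocks₁₁ + N'.toBlocks₂₂ * adj'.toBlocks₂₁
      = (0 : Matrix (Fin s) (Fin 2) R) := by
    have := congrArg Matrix.toBlocks₂₁ hmul
    simpa [toBlocks_fromBlocks₂₁] using this
  have hNX : N' * fromBlocks adj'.toBlocks₁₁ 0 adj'.toBlocks₂₁ 1
      = fromBlocks (N.det • (1 : Matrix (Fin 2) (Fin 2) R)) N'.toBlocks₁₂ 0 N'.toBlocks₂₂ := by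
    conv_lhs => rw [← fromBlocks_toBlocks N']
    rw [fromBlocks_multiply, h1, h2]
    simp
  have hdet := congrArg Matrix.det hNX
  rw [det_mul, det_fromBlocks_zero₁₂, det_fromBlocks_zero₂₁, det_one, mul_one] at hdet
  have hdN' : N'.det = N.det := det_submatrix_equiv_self e N
  have hdsm : (N.det • (1 : Matrix (Fin 2) (Fin 2) R)).det = N.det ^ 2 := by
    simp [det_smul]
  rw [hdN', hdsm] at hdet
  have h0 : e (Sum.inl 0) = (0 : Fin (s + 2)) := by
    apply Fin.ext
    simp [he]
  have h1' : e (Sum.inl 1) = (1 : Fin (s + 2)) := by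
    apply Fin.ext
    simp [he]
  have hP : adj'.toBlocks₁₁.det
      = adjugate N 0 0 * adjugate N 1 1 - adjugate N 0 1 * adjugate N 1 0 := by
    rw [det_fin_two]
    simp [hadj', Matrix.toBlocks₁₁, h0, h1']
  have hInner : N'.toBlocks₂₂
      = N.submatrix (fun k : Fin s => k.succ.succ) (fun k : Fin s => k.succ.succ) := by
    ext i j
    have hi : e (Sum.inr i) = i.succ.succ := by
      apply Fin.ext
      simp [he]
    have hj : e (Sum.inr j) = j.succ.succ := by
      apply Fin.ext
      simp [he]
    simp [hN', Matrix.toBlocks₂₂, hi, hj]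
  rw [hP, hInner] at hdet
  exact hdet

end Key

/-- Desnanot–Jacobi identity over ℂ (proved via a generic matrix over a polynomial ring). -/
lemma desnanot_jacobi {s : ℕ} (N : Matrix (Fin (s + 2)) (Fin (s + 2)) ℂ) :
    (N.submatrix Fin.succ Fin.succ).det *
        (N.submatrix (Fin.succAbove 1) (Fin.succAbove 1)).det
      - (N.submatrix (Fin.succAbove 1) Fin.succ).det *
        (N.submatrix Fin.succ (Fin.succAbove 1)).det
      = N.det *
        (N.submatrix (fun k : Fin s => k.succ.succ) (fun k : Fin s => k.succ.succ)).det := by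
  classical
  set ι := Fin (s + 2) × Fin (s + 2) with hι
  set Rg := MvPolynomial ι ℂ with hRg
  set G : Matrix (Fin (s + 2)) (Fin (s + 2)) Rg :=
    Matrix.of fun i j => MvPolynomial.X (i, j) with hG
  have hGdet : G.det ≠ 0 := by
    intro h
    have h2 := congrArg (MvPolynomial.eval (fun p : ι => if p.1 = p.2 then (1 : ℂ) else 0)) h
    rw [RingHom.map_det, map_zero] at h2
    have hone : (MvPolynomial.eval
          (fun p : ι => if p.1 = p.2 then (1 : ℂ) else 0)).mapMatrix G
        = (1 : Matrix (Fin (s + 2)) (Fin (s + 2)) ℂ) := by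
      ext i j
      by_cases hij : i = j <;>
        simp [RingHom.mapMatrix_apply, hG, Matrix.one_apply, hij]
    rw [hone, det_one] at h2
    exact one_ne_zero h2
  have hkey := jacobi_key G
  rw [pow_two, mul_assoc] at hkey
  have hcanc := mul_left_cancel₀ hGdet hkey
  have hA : ∀ i j : Fin (s + 2), adjugate G i j
      = (-1) ^ (j + i : ℕ) * (G.submatrix j.succAbove i.succAbove).det := fun i j =>
    adjugate_fin_succ_eq_det_submatrix G i j
  rw [hA 0 0, hA 1 1, hA 0 1, hA 1 0] at hcanc
  norm_num at hcanc
  rw [neg_one_mul, neg_one_mul, neg_mul_neg] at hcanc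
  set φ : Rg →+* ℂ := (MvPolynomial.eval fun p : ι => N p.1 p.2 : Rg →+* ℂ) with hφ
  have hd : ∀ {m : ℕ} (r c : Fin m → Fin (s + 2)),
      φ (G.submatrix r c).det = (N.submatrix r c).det := by
    intro m r c
    rw [RingHom.map_det]
    congr 1
    ext i j
    simp only [RingHom.mapMatrix_apply, Matrix.map_apply, Matrix.submatrix_apply, hG, hφ,
      Matrix.of_apply]
    exact MvPolynomial.eval_X _
  have hdG : φ G.det = N.det := by
    rw [RingHom.map_det]
    congr 1
    ext i j
    simp only [RingHom.mapMatrix_apply, Matrix.map_apply, hG, hφ, Matrix.of_apply]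
    exact MvPolynomial.eval_X _
  have htr := congrArg φ hcanc
  rw [map_sub, _root_.map_mul, _root_.map_mul, _root_.map_mul,
    hd, hd, hd, hd, hd, hdG] at htr
  exact htr

/-- The minor `M^{A,B}` of a matrix `M` with rows selected by the tuple `A`
and columns selected by the tuple `B`; for `s = 0` this equals `1`. -/
noncomputable def minor {I J : Type*} (M : I → J → ℂ) {s : ℕ}
    (A : Fin s → I) (B : Fin s → J) : ℂ :=
  Matrix.det (Matrix.of fun α β => M (A α) (B β))

/-- Jacobi identity for minors:
`M^{A,B}·M^{aāA,bb̄B} − M^{aA,bB}·M^{āA,b̄B} + M^{āA,bB}·M^{aA,b̄B} = 0`. -/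
theorem jacobi_identity_minors {I J : Type*} (M : I → J → ℂ) {s : ℕ}
    (A : Fin s → I) (B : Fin s → J)
    (hA : Function.Injective A) (hB : Function.Injective B)
    (a abar : I) (b bbar : J)
    (haabar : a ≠ abar) (haA : ∀ α, a ≠ A α) (habarA : ∀ α, abar ≠ A α)
    (hbbbar : b ≠ bbar) (hbB : ∀ β, b ≠ B β) (hbbarB : ∀ β, bbar ≠ B β) :
    minor M A B * minor M (Fin.cons a (Fin.cons abar A)) (Fin.cons b (Fin.cons bbar B))
      - minor M (Fin.cons a A) (Fin.cons b B) * minor M (Fin.cons abar A) (Fin.cons bbar B)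
      + minor M (Fin.cons abar A) (Fin.cons b B) * minor M (Fin.cons a A) (Fin.cons bbar B)
      = 0 := by
  classical
  set N : Matrix (Fin (s + 2)) (Fin (s + 2)) ℂ :=
    Matrix.of fun i j => M ((Fin.cons a (Fin.cons abar A) : Fin (s + 2) → I) i)
      ((Fin.cons b (Fin.cons bbar B) : Fin (s + 2) → J) j) with hN
  have hDJ := desnanot_jacobi N
  have hrow1 : ∀ i : Fin (s + 1),
      (Fin.cons a (Fin.cons abar A) : Fin (s + 2) → I) ((1 : Fin (s + 2)).succAbove i)
        = (Fin.cons a A : Fin (s + 1) → I) i := by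
    intro i
    induction i using Fin.cases with
    | zero =>
      have h : (1 : Fin (s + 2)).succAbove 0 = 0 := by
        apply Fin.ext
        simp [Fin.succAbove, Fin.lt_def]
      rw [h]
      simp
    | succ k =>
      have h : (1 : Fin (s + 2)).succAbove k.succ = k.succ.succ := by
        apply Fin.ext
        simp [Fin.succAbove, Fin.lt_def]
      rw [h]
      simp
  have hcol1 : ∀ j : Fin (s + 1),
      (Fin.cons b (Fin.cons bbar B) : Fin (s + 2) → J) ((1 : Fin (s + 2)).succAbove j)
        = (Fin.cons b B : Fin (s + 1) → J) j := by
    intro j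
    induction j using Fin.cases with
    | zero =>
      have h : (1 : Fin (s + 2)).succAbove 0 = 0 := by
        apply Fin.ext
        simp [Fin.succAbove, Fin.lt_def]
      rw [h]
      simp
    | succ k =>
      have h : (1 : Fin (s + 2)).succAbove k.succ = k.succ.succ := by
        apply Fin.ext
        simp [Fin.succAbove, Fin.lt_def]
      rw [h]
      simp
  have m00 : (N.submatrix Fin.succ Fin.succ).det
      = minor M (Fin.cons abar A) (Fin.cons bbar B) := by
    have hm : N.submatrix Fin.succ Fin.succ
        = Matrix.of fun (α : Fin (s + 1)) (β : Fin (s + 1)) =>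
            M ((Fin.cons abar A : Fin (s + 1) → I) α) ((Fin.cons bbar B : Fin (s + 1) → J) β) := by
      ext i j
      simp [hN]
    unfold minor
    rw [hm]
  have m11 : (N.submatrix (Fin.succAbove 1) (Fin.succAbove 1)).det
      = minor M (Fin.cons a A) (Fin.cons b B) := by
    have hm : N.submatrix (Fin.succAbove 1) (Fin.succAbove 1)
        = Matrix.of fun (α : Fin (s + 1)) (β : Fin (s + 1)) =>
            M ((Fin.cons a A : Fin (s + 1) → I) α) ((Fin.cons b B : Fin (s + 1) → J) β) := by
      ext i j
      simp [hN, hrow1 i, hcol1 j]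
    unfold minor
    rw [hm]
  have m10 : (N.submatrix (Fin.succAbove 1) Fin.succ).det
      = minor M (Fin.cons a A) (Fin.cons bbar B) := by
    have hm : N.submatrix (Fin.succAbove 1) Fin.succ
        = Matrix.of fun (α : Fin (s + 1)) (β : Fin (s + 1)) =>
            M ((Fin.cons a A : Fin (s + 1) → I) α) ((Fin.cons bbar B : Fin (s + 1) → J) β) := by
      ext i j
      simp [hN, hrow1 i]
    unfold minor
    rw [hm]
  have m01 : (N.submatrix Fin.succ (Fin.succAbove 1)).det
      = minor M (Fin.cons abar A) (Fin.cons b B) := by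
    have hm : N.submatrix Fin.succ (Fin.succAbove 1)
        = Matrix.of fun (α : Fin (s + 1)) (β : Fin (s + 1)) =>
            M ((Fin.cons abar A : Fin (s + 1) → I) α) ((Fin.cons b B : Fin (s + 1) → J) β) := by
      ext i j
      simp [hN, hcol1 j]
    unfold minor
    rw [hm]
  have mbig : N.det = minor M (Fin.cons a (Fin.cons abar A)) (Fin.cons b (Fin.cons bbar B)) := by
    unfold minor
    rfl
  have minner : (N.submatrix (fun k : Fin s => k.succ.succ) (fun k : Fin s => k.succ.succ)).det
      = minor M A B := by
    have hm : N.submatrix (fun k : Fin s => k.succ.succ) (fun k : Fin s => k.succ.succ)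
        = Matrix.of fun (α : Fin s) (β : Fin s) => M (A α) (B β) := by
      ext i j
      simp [hN]
    unfold minor
    rw [hm]
  rw [m00, m11, m10, m01, mbig, minner] at hDJ
  linear_combination -hDJ
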